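/- Let h² : ℝⁿ → ℝ^d be differentiable with Jacobian Dh² (ℓ,κ)-Hölder continuous in the operator norm (ℓ > 0, κ ∈ (0,1]), and let h¹ : ℝ^d → ℝ be convex and differentiable with ∇h¹ L-Lipschitz and ‖∇h¹(u)‖ ≤ M for all u ∈ ℝ^d. Set h(x) = h¹(h²(x)) and, for y ∈ ℝⁿ, define h̃(x|y) := h¹(h²(y) + Dh²(y)(x − y)) + (Mℓ/(κ+1))‖x − y‖^{κ+1}. Then: (a) h̃(·|y) is convex; (b) h̃(x|y) ≥ h(x) for all x ∈ ℝⁿ, with h̃(y|y) = h(y); (c) for every convex compact set K ⊆ ℝⁿ of diameter at most D on which sup_{x∈K}‖Dh²(x)‖ ≤ G, one has ‖∇h̃(x|y) − ∇h(x)‖ ≤ (2Mℓ + GLℓD/(κ+1))·‖x − y‖^κ for all x, y ∈ K. -/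

import Mathlib

open scoped RealInnerProductSpace
open Real Set

section Aux

lemma aux_rpow_sub_one_mul {a q : ℝ} (ha : 0 ≤ a) (hq : q ≠ 0) :
    a ^ (q - 1) * a = a ^ q := by
  calc a ^ (q - 1) * a = a ^ (q - 1) * a ^ (1 : ℝ) := by rw [Real.rpow_one]
    _ = a ^ (q - 1 + 1) := (Real.rpow_add' ha (by simpa using hq)).symm
    _ = a ^ q := by norm_num

variable {E F : Type*} [NormedAddCommGroup E] [InnerProductSpace ℝ E]
  [NormedAddCommGroup F] [InnerProductSpace ℝ F]

omit [InnerProductSpace ℝ E] [InnerProductSpace ℝ F] in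
lemma aux_D2cont [NormedSpace ℝ E] [NormedSpace ℝ F] {D2 : E → (E →L[ℝ] F)} {ℓ κ : ℝ}
    (hκ0 : 0 < κ)
    (hD2holder : ∀ x y, ‖D2 x - D2 y‖ ≤ ℓ * ‖x - y‖ ^ κ) : Continuous D2 := by
  rw [continuous_iff_continuousAt]
  intro a
  rw [ContinuousAt, tendsto_iff_norm_sub_tendsto_zero]
  have hub : Filter.Tendsto (fun x' : E => ℓ * ‖x' - a‖ ^ κ) (nhds a) (nhds 0) := by
    have h1 : Filter.Tendsto (fun x' : E => ‖x' - a‖) (nhds a) (nhds 0) := by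
      simpa using tendsto_norm_sub_self a
    have h2 : ContinuousAt (fun r : ℝ => ℓ * r ^ κ) 0 :=
      continuousAt_const.mul (Real.continuousAt_rpow_const 0 κ (Or.inr hκ0.le))
    have := h2.tendsto.comp h1
    simpa [Function.comp_def, Real.zero_rpow hκ0.ne'] using this
  exact squeeze_zero (fun _ => norm_nonneg _) (fun x' => hD2holder x' a) hub

omit [InnerProductSpace ℝ E] [InnerProductSpace ℝ F] in
lemma aux_taylor [NormedSpace ℝ E] [NormedSpace ℝ F] [CompleteSpace F]
    {h2 : E → F} {D2 : E → (E →L[ℝ] F)}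
    (hD2 : ∀ x, HasFDerivAt h2 (D2 x) x) {ℓ κ : ℝ} (hκ0 : 0 < κ)
    (hD2holder : ∀ x y, ‖D2 x - D2 y‖ ≤ ℓ * ‖x - y‖ ^ κ) (x y : E) :
    ‖h2 x - h2 y - D2 y (x - y)‖ ≤ ℓ / (κ + 1) * ‖x - y‖ ^ (κ + 1) := by
  set v := x - y with hv
  have hD2cont : Continuous D2 := aux_D2cont hκ0 hD2holder
  set φ : ℝ → F := fun t => h2 (y + t • v) - t • (D2 y v) with hφ
  have hφ' : ∀ t : ℝ, HasDerivAt φ (D2 (y + t • v) v - D2 y v) t := by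
    intro t
    have hline : HasDerivAt (fun t : ℝ => y + t • v) v t := by
      simpa using ((hasDerivAt_id t).smul_const v).const_add y
    have hc : HasDerivAt (fun t : ℝ => h2 (y + t • v)) (D2 (y + t • v) v) t :=
      (hD2 (y + t • v)).comp_hasDerivAt t hline
    have hd : HasDerivAt (fun t : ℝ => t • (D2 y v)) (D2 y v) t := by
      simpa using (hasDerivAt_id t).smul_const (D2 y v)
    exact hc.sub hd
  have hcont : Continuous fun t : ℝ => D2 (y + t • v) v - D2 y v := by
    have hl : Continuous fun t : ℝ => y + t • v := by continuity
    exact ((ContinuousLinearMap.apply ℝ F v).continuous.comp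
      (hD2cont.comp hl)).sub continuous_const
  have hint : IntervalIntegrable (fun t : ℝ => D2 (y + t • v) v - D2 y v)
      MeasureTheory.volume 0 1 := hcont.intervalIntegrable 0 1
  have heq : ∫ t in (0:ℝ)..1, (D2 (y + t • v) v - D2 y v) = φ 1 - φ 0 :=
    intervalIntegral.integral_eq_sub_of_hasDerivAt (fun t _ => hφ' t) hint
  have hφ1 : φ 1 - φ 0 = h2 x - h2 y - D2 y v := by
    simp [hφ, hv]
    abel
  rw [← hφ1, ← heq]
  have hbound : ∀ t ∈ Icc (0:ℝ) 1, ‖D2 (y + t • v) v - D2 y v‖ ≤ ℓ * ‖v‖ ^ (κ + 1) * t ^ κ := by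
    intro t ht
    have h1 : ‖D2 (y + t • v) v - D2 y v‖ ≤ ‖D2 (y + t • v) - D2 y‖ * ‖v‖ := by
      rw [show D2 (y + t • v) v - D2 y v = (D2 (y + t • v) - D2 y) v by simp]
      exact (D2 (y + t • v) - D2 y).le_opNorm v
    have h2' : ‖D2 (y + t • v) - D2 y‖ ≤ ℓ * ‖t • v‖ ^ κ := by
      simpa using hD2holder (y + t • v) y
    have h3 : ‖t • v‖ ^ κ = t ^ κ * ‖v‖ ^ κ := by
      rw [norm_smul, Real.norm_eq_abs, abs_of_nonneg ht.1,
        Real.mul_rpow ht.1 (norm_nonneg _)]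
    calc ‖D2 (y + t • v) v - D2 y v‖ ≤ ℓ * ‖t • v‖ ^ κ * ‖v‖ :=
          le_trans h1 (mul_le_mul_of_nonneg_right h2' (norm_nonneg _))
      _ = ℓ * ((‖v‖ ^ κ * ‖v‖) * t ^ κ) := by rw [h3]; ring
      _ = ℓ * ‖v‖ ^ (κ + 1) * t ^ κ := by
          rw [show ‖v‖ ^ κ * ‖v‖ = ‖v‖ ^ (κ + 1) by
            simpa using aux_rpow_sub_one_mul (norm_nonneg v) (by linarith : κ + 1 ≠ 0)]
          ring
  calc ‖∫ t in (0:ℝ)..1, (D2 (y + t • v) v - D2 y v)‖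
      ≤ ∫ t in (0:ℝ)..1, ‖D2 (y + t • v) v - D2 y v‖ :=
        intervalIntegral.norm_integral_le_integral_norm zero_le_one
    _ ≤ ∫ t in (0:ℝ)..1, ℓ * ‖v‖ ^ (κ + 1) * t ^ κ := by
        apply intervalIntegral.integral_mono_on zero_le_one (hcont.norm.intervalIntegrable 0 1)
        · apply IntervalIntegrable.const_mul
          exact intervalIntegral.intervalIntegrable_rpow (by left; linarith)
        · exact hbound
    _ = ℓ / (κ + 1) * ‖v‖ ^ (κ + 1) := by
        rw [intervalIntegral.integral_const_mul, integral_rpow (Or.inl (by linarith))]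
        rw [Real.one_rpow, Real.zero_rpow (by linarith : κ + 1 ≠ 0)]
        ring

lemma aux_toDual_innerSL [CompleteSpace E] (v : E) : (InnerProductSpace.toDual ℝ E) v = innerSL ℝ v := by
  ext w; simp [InnerProductSpace.toDual_apply_apply]

lemma aux_hasGradientAt_of_fderiv [CompleteSpace E] {f : E → ℝ} {v x : E}
    (h : HasFDerivAt f (innerSL ℝ v) x) : HasGradientAt f v x := by
  rw [hasGradientAt_iff_hasFDerivAt, aux_toDual_innerSL]; exact h

lemma aux_hasFDerivAt_norm_rpow (y x : E) {p : ℝ} (hp : 1 < p) :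
    HasFDerivAt (fun z : E => ‖z - y‖ ^ p)
      (innerSL ℝ ((p * ‖x - y‖ ^ (p - 2)) • (x - y))) x := by
  rcases eq_or_ne x y with rfl | hxy
  · have hz : ((p * ‖x - x‖ ^ (p - 2)) • (x - x)) = 0 := by simp
    rw [hz, map_zero, hasFDerivAt_iff_isLittleO_nhds_zero]
    have hten : Filter.Tendsto (fun h : E => ‖h‖ ^ (p - 1)) (nhds 0) (nhds 0) := by
      have h1 : Filter.Tendsto (fun h : E => ‖h‖) (nhds 0) (nhds 0) := by
        simpa using tendsto_norm_zero
      have h2 : ContinuousAt (fun r : ℝ => r ^ (p - 1)) 0 :=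
        Real.continuousAt_rpow_const 0 (p - 1) (Or.inr (by linarith))
      have := h2.tendsto.comp h1
      simpa [Function.comp_def, Real.zero_rpow (by linarith : p - 1 ≠ 0)] using this
    rw [Asymptotics.isLittleO_iff]
    intro c hc
    filter_upwards [hten.eventually_le_const hc] with h hh
    have h0 : ‖h‖ ^ (p - 1) * ‖h‖ = ‖h‖ ^ p :=
      aux_rpow_sub_one_mul (norm_nonneg _) (by linarith)
    have : ‖‖x + h - x‖ ^ p - ‖x - x‖ ^ p‖ = ‖h‖ ^ p := by
      simp [Real.zero_rpow (by linarith : p ≠ 0),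
        abs_of_nonneg (Real.rpow_nonneg (norm_nonneg _) _)]
    rw [ContinuousLinearMap.zero_apply, sub_zero, this, ← h0]
    exact mul_le_mul_of_nonneg_right hh (norm_nonneg _)
  · have hne : ‖x - y‖ ≠ 0 := by simp [sub_eq_zero, hxy]
    have h1 : HasFDerivAt (fun z : E => z - y) (ContinuousLinearMap.id ℝ E) x :=
      (hasFDerivAt_id x).sub_const y
    have h2 : HasFDerivAt (fun z : E => ‖z - y‖ ^ 2)
        (2 • (innerSL ℝ (x - y)).comp (ContinuousLinearMap.id ℝ E)) x := h1.norm_sq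
    have h3 := h2.rpow_const (p := p / 2) (Or.inl (by positivity))
    have hfun : (fun z : E => (‖z - y‖ ^ 2) ^ (p / 2)) = fun z : E => ‖z - y‖ ^ p := by
      funext z
      rw [← Real.rpow_natCast ‖z - y‖ 2, ← Real.rpow_mul (norm_nonneg _)]
      congr 1
      push_cast
      ring
    have hder : (p / 2 * (‖x - y‖ ^ 2) ^ (p / 2 - 1)) •
        (2 • (innerSL ℝ (x - y)).comp (ContinuousLinearMap.id ℝ E)) =
        innerSL ℝ ((p * ‖x - y‖ ^ (p - 2)) • (x - y)) := by
      have hb : (‖x - y‖ ^ 2 : ℝ) ^ (p / 2 - 1) = ‖x - y‖ ^ (p - 2) := by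
        rw [← Real.rpow_natCast ‖x - y‖ 2, ← Real.rpow_mul (norm_nonneg _)]
        congr 1
        push_cast
        ring
      ext w
      simp only [two_smul, ContinuousLinearMap.smul_apply, ContinuousLinearMap.add_apply,
        ContinuousLinearMap.comp_apply, ContinuousLinearMap.coe_id', id_eq,
        innerSL_apply_apply, smul_eq_mul, hb, real_inner_smul_left]
      ring
    rw [hfun, hder] at h3
    exact h3

lemma aux_h1_lip [CompleteSpace F] {h1 : F → ℝ} {g1 : F → F} (hg1 : ∀ u, HasGradientAt h1 (g1 u) u)
    {M : ℝ} (hg1bnd : ∀ u, ‖g1 u‖ ≤ M) (u v : F) : ‖h1 u - h1 v‖ ≤ M * ‖u - v‖ := by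
  apply Convex.norm_image_sub_le_of_norm_hasFDerivWithin_le
    (f' := fun w => innerSL ℝ (g1 w)) (s := univ)
    (fun w _ => ((aux_toDual_innerSL (g1 w)) ▸ (hg1 w).hasFDerivAt).hasFDerivWithinAt)
    (fun w _ => by rw [innerSL_apply_norm]; exact hg1bnd w)
    convex_univ (mem_univ v) (mem_univ u)

lemma aux_innerSL_adjoint [CompleteSpace E] [CompleteSpace F] (A : E →L[ℝ] F) (v : F) :
    innerSL ℝ (ContinuousLinearMap.adjoint A v) = (innerSL ℝ v).comp A := by
  ext w
  simp [ContinuousLinearMap.adjoint_inner_left]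

omit [InnerProductSpace ℝ E] in
lemma aux_comb [NormedSpace ℝ E] (x z y : E) {a b : ℝ} (hab : a + b = 1) :
    a • x + b • z - y = a • (x - y) + b • (z - y) := by
  calc a • x + b • z - y = a • x + b • z - (a • y + b • y) := by
        rw [← add_smul, hab, one_smul]
    _ = a • (x - y) + b • (z - y) := by rw [smul_sub, smul_sub]; abel

end Aux

set_option maxHeartbeats 1000000 in
/-- (Proposition 4 in the paper: nested composite surrogates.) For
`h(x) = h¹(h²(x))` with `h¹` convex, `∇h¹` `L`-Lipschitz and bounded by `M`, and the
Jacobian `Dh²` `(ℓ,κ)`-Hölder continuous, the surrogate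
`h̃(x|y) = h¹(h²(y) + Dh²(y)(x−y)) + (Mℓ/(κ+1))‖x−y‖^{κ+1}` is a convex majorant of
`h`, exact at `y`, and on every convex compact set `K` of diameter `≤ D` on which
`‖Dh²‖ ≤ G`, its gradient differs from `∇h` by at most
`(2Mℓ + GLℓD/(κ+1))‖x−y‖^κ`.  Here `∇h(x) = (Dh²(x))^*(∇h¹(h²(x)))` and
`∇h̃(x|y) = (Dh²(y))^*(∇h¹(h²(y) + Dh²(y)(x−y))) + Mℓ‖x−y‖^{κ−1}(x−y)`. -/
theorem composite_surrogate {n d : ℕ}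
    (h1 : EuclideanSpace ℝ (Fin d) → ℝ)
    (h2 : EuclideanSpace ℝ (Fin n) → EuclideanSpace ℝ (Fin d))
    (g1 : EuclideanSpace ℝ (Fin d) → EuclideanSpace ℝ (Fin d))
    (D2 : EuclideanSpace ℝ (Fin n) → (EuclideanSpace ℝ (Fin n) →L[ℝ] EuclideanSpace ℝ (Fin d)))
    (hconv1 : ConvexOn ℝ univ h1)
    (hg1 : ∀ u, HasGradientAt h1 (g1 u) u)
    (hD2 : ∀ x, HasFDerivAt h2 (D2 x) x)
    (L M ℓ κ : ℝ) (hL : 0 < L) (hM : 0 < M) (hℓ : 0 < ℓ) (hκ0 : 0 < κ) (hκ1 : κ ≤ 1)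
    (hg1lip : ∀ u v, ‖g1 u - g1 v‖ ≤ L * ‖u - v‖)
    (hg1bnd : ∀ u, ‖g1 u‖ ≤ M)
    (hD2holder : ∀ x y, ‖D2 x - D2 y‖ ≤ ℓ * ‖x - y‖ ^ κ) :
    -- (a) convexity of the surrogate
    (∀ y, ConvexOn ℝ univ
      (fun x => h1 (h2 y + D2 y (x - y)) + (M * ℓ / (κ + 1)) * ‖x - y‖ ^ (κ + 1))) ∧
    -- (b) majorization with equality at the base point
    (∀ y x, h1 (h2 x) ≤
      h1 (h2 y + D2 y (x - y)) + (M * ℓ / (κ + 1)) * ‖x - y‖ ^ (κ + 1)) ∧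
    (∀ y, h1 (h2 y + D2 y (y - y)) + (M * ℓ / (κ + 1)) * ‖y - y‖ ^ (κ + 1) = h1 (h2 y)) ∧
    -- the gradients of `h` and of the surrogate
    (∀ x, HasGradientAt (fun z => h1 (h2 z))
      (ContinuousLinearMap.adjoint (D2 x) (g1 (h2 x))) x) ∧
    (∀ y x, HasGradientAt
      (fun z => h1 (h2 y + D2 y (z - y)) + (M * ℓ / (κ + 1)) * ‖z - y‖ ^ (κ + 1))
      (ContinuousLinearMap.adjoint (D2 y) (g1 (h2 y + D2 y (x - y))) +
        (M * ℓ * ‖x - y‖ ^ (κ - 1)) • (x - y)) x) ∧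
    -- (c) the gradient error bound on convex compact sets
    (∀ (K : Set (EuclideanSpace ℝ (Fin n))) (D G : ℝ),
      Convex ℝ K → IsCompact K → Metric.diam K ≤ D → (∀ x ∈ K, ‖D2 x‖ ≤ G) →
      ∀ x ∈ K, ∀ y ∈ K,
        ‖(ContinuousLinearMap.adjoint (D2 y) (g1 (h2 y + D2 y (x - y))) +
            (M * ℓ * ‖x - y‖ ^ (κ - 1)) • (x - y)) -
          ContinuousLinearMap.adjoint (D2 x) (g1 (h2 x))‖ ≤
        (2 * M * ℓ + G * L * ℓ * D / (κ + 1)) * ‖x - y‖ ^ κ) := by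
  have hκp : (1:ℝ) < κ + 1 := by linarith
  have hκ1ne : (κ:ℝ) + 1 ≠ 0 := by linarith
  refine ⟨?_, ?_, ?_, ?_, ?_, ?_⟩
  · -- (a) convexity
    intro y
    have hA : ConvexOn ℝ univ (fun x => h1 (h2 y + D2 y (x - y))) := by
      refine ⟨convex_univ, fun x _ z _ a b ha hb hab => ?_⟩
      have him : h2 y + D2 y (a • x + b • z - y) =
          a • (h2 y + D2 y (x - y)) + b • (h2 y + D2 y (z - y)) := by
        calc h2 y + D2 y (a • x + b • z - y)
            = (a + b) • h2 y + (a • D2 y (x - y) + b • D2 y (z - y)) := by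
              rw [hab, one_smul, aux_comb x z y hab, map_add, map_smul, map_smul]
          _ = a • (h2 y + D2 y (x - y)) + b • (h2 y + D2 y (z - y)) := by
              rw [add_smul, smul_add, smul_add]; abel
      simp only
      rw [him]
      simpa using hconv1.2 (mem_univ (h2 y + D2 y (x - y)))
        (mem_univ (h2 y + D2 y (z - y))) ha hb hab
    have hB : ConvexOn ℝ univ
        (fun x : EuclideanSpace ℝ (Fin n) => ‖x - y‖ ^ (κ + 1)) := by
      refine ⟨convex_univ, fun x _ z _ a b ha hb hab => ?_⟩
      have h1' : ‖a • x + b • z - y‖ ≤ a * ‖x - y‖ + b * ‖z - y‖ := by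
        rw [aux_comb x z y hab]
        calc ‖a • (x - y) + b • (z - y)‖ ≤ ‖a • (x - y)‖ + ‖b • (z - y)‖ := norm_add_le _ _
          _ = a * ‖x - y‖ + b * ‖z - y‖ := by
              rw [norm_smul, norm_smul, Real.norm_eq_abs, Real.norm_eq_abs,
                abs_of_nonneg ha, abs_of_nonneg hb]
      have h2' := Real.rpow_le_rpow (norm_nonneg _) h1' (by linarith : (0:ℝ) ≤ κ + 1)
      have h3' := (convexOn_rpow (by linarith : (1:ℝ) ≤ κ + 1)).2
        (mem_Ici.2 (norm_nonneg (x - y))) (mem_Ici.2 (norm_nonneg (z - y))) ha hb hab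
      simp only [smul_eq_mul] at h3' ⊢
      exact h2'.trans h3'
    have := hA.add (hB.smul (by positivity : (0:ℝ) ≤ M * ℓ / (κ + 1)))
    simpa [smul_eq_mul, Pi.add_def] using this
  · -- (b) majorization
    intro y x
    have ht := aux_taylor hD2 hκ0 hD2holder x y
    have hl := aux_h1_lip hg1 hg1bnd (h2 x) (h2 y + D2 y (x - y))
    have he : h2 x - (h2 y + D2 y (x - y)) = h2 x - h2 y - D2 y (x - y) := by abel
    rw [he, Real.norm_eq_abs] at hl
    have h2' := (abs_le.1 hl).2
    have h3' : M * ‖h2 x - h2 y - D2 y (x - y)‖ ≤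
        M * (ℓ / (κ + 1) * ‖x - y‖ ^ (κ + 1)) :=
      mul_le_mul_of_nonneg_left ht hM.le
    have : M * (ℓ / (κ + 1) * ‖x - y‖ ^ (κ + 1)) =
        M * ℓ / (κ + 1) * ‖x - y‖ ^ (κ + 1) := by ring
    linarith
  · -- (b') exactness
    intro y
    simp [Real.zero_rpow hκ1ne]
  · -- gradient of h
    intro x
    apply aux_hasGradientAt_of_fderiv
    rw [aux_innerSL_adjoint (D2 x) (g1 (h2 x))]
    have hfd : HasFDerivAt h1 (innerSL ℝ (g1 (h2 x))) (h2 x) :=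
      aux_toDual_innerSL (g1 (h2 x)) ▸ (hg1 (h2 x)).hasFDerivAt
    exact hfd.comp x (hD2 x)
  · -- gradient of the surrogate
    intro y x
    have hu : HasFDerivAt (fun z : EuclideanSpace ℝ (Fin n) => h2 y + D2 y (z - y)) (D2 y) x := by
      have h0' := (D2 y).hasFDerivAt.comp x ((hasFDerivAt_id x).sub_const y)
      rw [ContinuousLinearMap.comp_id] at h0'
      exact h0'.const_add (h2 y)
    have hfd1 : HasFDerivAt h1 (innerSL ℝ (g1 (h2 y + D2 y (x - y)))) (h2 y + D2 y (x - y)) :=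
      aux_toDual_innerSL (g1 (h2 y + D2 y (x - y))) ▸ (hg1 (h2 y + D2 y (x - y))).hasFDerivAt
    have hc1 := hfd1.comp x hu
    have hc2 := (aux_hasFDerivAt_norm_rpow y x (p := κ + 1) hκp).const_mul (M * ℓ / (κ + 1))
    apply aux_hasGradientAt_of_fderiv
    have hsum := hc1.add hc2
    have hder : (innerSL ℝ (g1 (h2 y + D2 y (x - y)))).comp (D2 y) +
        (M * ℓ / (κ + 1)) • innerSL ℝ (((κ + 1) * ‖x - y‖ ^ (κ + 1 - 2)) • (x - y)) =
        innerSL ℝ (ContinuousLinearMap.adjoint (D2 y) (g1 (h2 y + D2 y (x - y))) +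
          (M * ℓ * ‖x - y‖ ^ (κ - 1)) • (x - y)) := by
      rw [map_add, aux_innerSL_adjoint]
      congr 1
      ext w
      simp only [ContinuousLinearMap.smul_apply, innerSL_apply_apply, real_inner_smul_left,
        smul_eq_mul]
      rw [show κ + 1 - 2 = κ - 1 by ring]
      field_simp
    rw [← hder]
    exact hsum
  · -- (c) gradient error bound
    intro K D G hKconv hKcomp hdiam hG x hx y hy
    set u := h2 y + D2 y (x - y) with hu
    have hxyD : ‖x - y‖ ≤ D := by
      rw [← dist_eq_norm]
      exact (Metric.dist_le_diam_of_mem hKcomp.isBounded hx hy).trans hdiam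
    have hκnn : (0:ℝ) ≤ ‖x - y‖ ^ κ := Real.rpow_nonneg (norm_nonneg _) κ
    have hsplit : (ContinuousLinearMap.adjoint (D2 y) (g1 u) +
          (M * ℓ * ‖x - y‖ ^ (κ - 1)) • (x - y)) -
          ContinuousLinearMap.adjoint (D2 x) (g1 (h2 x)) =
        ((ContinuousLinearMap.adjoint (D2 y) - ContinuousLinearMap.adjoint (D2 x)) (g1 u) +
          ContinuousLinearMap.adjoint (D2 x) (g1 u - g1 (h2 x))) +
          (M * ℓ * ‖x - y‖ ^ (κ - 1)) • (x - y) := by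
      simp only [ContinuousLinearMap.sub_apply, map_sub]
      abel
    rw [hsplit]
    have T1 : ‖(ContinuousLinearMap.adjoint (D2 y) -
        ContinuousLinearMap.adjoint (D2 x)) (g1 u)‖ ≤ M * ℓ * ‖x - y‖ ^ κ := by
      have e1 : ContinuousLinearMap.adjoint (D2 y) - ContinuousLinearMap.adjoint (D2 x) =
          ContinuousLinearMap.adjoint (D2 y - D2 x) := (map_sub _ _ _).symm
      rw [e1]
      calc ‖ContinuousLinearMap.adjoint (D2 y - D2 x) (g1 u)‖
          ≤ ‖ContinuousLinearMap.adjoint (D2 y - D2 x)‖ * ‖g1 u‖ :=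
            ContinuousLinearMap.le_opNorm _ _
        _ = ‖D2 y - D2 x‖ * ‖g1 u‖ := by
            rw [LinearIsometryEquiv.norm_map ContinuousLinearMap.adjoint]
        _ ≤ (ℓ * ‖y - x‖ ^ κ) * M :=
            mul_le_mul (hD2holder y x) (hg1bnd u) (norm_nonneg _) (by positivity)
        _ = M * ℓ * ‖x - y‖ ^ κ := by rw [norm_sub_rev]; ring
    have T2 : ‖ContinuousLinearMap.adjoint (D2 x) (g1 u - g1 (h2 x))‖ ≤
        G * L * ℓ * D / (κ + 1) * ‖x - y‖ ^ κ := by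
      have hG0 : (0:ℝ) ≤ G := (norm_nonneg _).trans (hG x hx)
      have step2 : ‖u - h2 x‖ ≤ ℓ / (κ + 1) * ‖x - y‖ ^ (κ + 1) := by
        have : u - h2 x = -(h2 x - h2 y - D2 y (x - y)) := by rw [hu]; abel
        rw [this, norm_neg]
        exact aux_taylor hD2 hκ0 hD2holder x y
      have step3 : ‖x - y‖ ^ (κ + 1) ≤ ‖x - y‖ ^ κ * D := by
        have : ‖x - y‖ ^ (κ + 1) = ‖x - y‖ ^ κ * ‖x - y‖ := by
          rw [← aux_rpow_sub_one_mul (norm_nonneg (x - y)) hκ1ne,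
            show κ + 1 - 1 = κ by ring]
        rw [this]
        exact mul_le_mul_of_nonneg_left hxyD hκnn
      calc ‖ContinuousLinearMap.adjoint (D2 x) (g1 u - g1 (h2 x))‖
          ≤ ‖ContinuousLinearMap.adjoint (D2 x)‖ * ‖g1 u - g1 (h2 x)‖ :=
            ContinuousLinearMap.le_opNorm _ _
        _ = ‖D2 x‖ * ‖g1 u - g1 (h2 x)‖ := by
            rw [LinearIsometryEquiv.norm_map ContinuousLinearMap.adjoint]
        _ ≤ G * (L * ‖u - h2 x‖) :=
            mul_le_mul (hG x hx) (hg1lip u (h2 x)) (norm_nonneg _) hG0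
        _ ≤ G * (L * (ℓ / (κ + 1) * (‖x - y‖ ^ κ * D))) := by
            have := step2.trans (by
              exact mul_le_mul_of_nonneg_left step3 (by positivity : (0:ℝ) ≤ ℓ / (κ + 1)))
            gcongr
        _ = G * L * ℓ * D / (κ + 1) * ‖x - y‖ ^ κ := by ring
    have T3 : ‖(M * ℓ * ‖x - y‖ ^ (κ - 1)) • (x - y)‖ ≤ M * ℓ * ‖x - y‖ ^ κ := by
      rw [norm_smul, Real.norm_eq_abs, abs_of_nonneg (by positivity)]
      rw [show M * ℓ * ‖x - y‖ ^ (κ - 1) * ‖x - y‖ =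
        M * ℓ * (‖x - y‖ ^ (κ - 1) * ‖x - y‖) by ring]
      rw [aux_rpow_sub_one_mul (norm_nonneg _) hκ0.ne']
    calc ‖((ContinuousLinearMap.adjoint (D2 y) - ContinuousLinearMap.adjoint (D2 x)) (g1 u) +
          ContinuousLinearMap.adjoint (D2 x) (g1 u - g1 (h2 x))) +
          (M * ℓ * ‖x - y‖ ^ (κ - 1)) • (x - y)‖
        ≤ ‖(ContinuousLinearMap.adjoint (D2 y) - ContinuousLinearMap.adjoint (D2 x)) (g1 u) +
            ContinuousLinearMap.adjoint (D2 x) (g1 u - g1 (h2 x))‖ +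
          ‖(M * ℓ * ‖x - y‖ ^ (κ - 1)) • (x - y)‖ := norm_add_le _ _
      _ ≤ (‖(ContinuousLinearMap.adjoint (D2 y) - ContinuousLinearMap.adjoint (D2 x)) (g1 u)‖ +
            ‖ContinuousLinearMap.adjoint (D2 x) (g1 u - g1 (h2 x))‖) +
          ‖(M * ℓ * ‖x - y‖ ^ (κ - 1)) • (x - y)‖ := by
            gcongr
            exact norm_add_le _ _
      _ ≤ (M * ℓ * ‖x - y‖ ^ κ + G * L * ℓ * D / (κ + 1) * ‖x - y‖ ^ κ) +
          M * ℓ * ‖x - y‖ ^ κ := add_le_add (add_le_add T1 T2) T3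
      _ = (2 * M * ℓ + G * L * ℓ * D / (κ + 1)) * ‖x - y‖ ^ κ := by ring
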